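/- A channel C : M_d(C) → M_{d'}(C) is entanglement-breaking (i.e., (C ⊗ id)(ρ) is separable for every state ρ on C^d ⊗ C^n, all n) if and only if its Choi operator R_C is separable. -/

import Mathlib

open Matrix Kronecker BigOperators
open scoped ComplexOrder

/-- A bipartite matrix is separable if it is a finite sum of tensor products of
positive semidefinite matrices. -/
def Separable {α β : Type*} [Fintype α] [Fintype β]
    (M : Matrix (α × β) (α × β) ℂ) : Prop :=
  ∃ (k : ℕ) (A : Fin k → Matrix α α ℂ) (B : Fin k → Matrix β β ℂ),
    (∀ i, (A i).PosSemidef) ∧ (∀ i, (B i).PosSemidef) ∧ M = ∑ i, (A i) ⊗ₖ (B i)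

/-- The extension `Φ ⊗ id_n` of a linear map to the first tensor factor. -/
def extMap {d d' : ℕ} {n : Type*}
    (Φ : Matrix (Fin d) (Fin d) ℂ →ₗ[ℂ] Matrix (Fin d') (Fin d') ℂ)
    (X : Matrix (Fin d × n) (Fin d × n) ℂ) : Matrix (Fin d' × n) (Fin d' × n) ℂ :=
  Matrix.of fun p q => Φ (Matrix.of fun m n => X (m, p.2) (n, q.2)) p.1 q.1

/-- The unnormalized maximally entangled vector `|I⟩⟩ = ∑ n, |n⟩ ⊗ |n⟩`. -/
def vecI {d : ℕ} : Fin d × Fin d → ℂ :=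
  fun p => if p.1 = p.2 then 1 else 0

/-- The Choi operator `R_Φ := (Φ ⊗ id)(|I⟩⟩⟨⟨I|)`. -/
def choi {d d' : ℕ} (Φ : Matrix (Fin d) (Fin d) ℂ →ₗ[ℂ] Matrix (Fin d') (Fin d') ℂ) :
    Matrix (Fin d' × Fin d) (Fin d' × Fin d) ℂ :=
  extMap Φ (Matrix.of fun p q => vecI p * vecI q)

lemma choi_apply {d d' : ℕ} (Φ : Matrix (Fin d) (Fin d) ℂ →ₗ[ℂ] Matrix (Fin d') (Fin d') ℂ)
    (p q : Fin d') (m n : Fin d) :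
    choi Φ (p, m) (q, n) = Φ (Matrix.single m n 1) p q := by
  have : (Matrix.of fun a c => (Matrix.of fun p q => vecI p * vecI q : Matrix (Fin d × Fin d) (Fin d × Fin d) ℂ) (a, m) (c, n))
      = Matrix.single m n (1:ℂ) := by
    ext a c
    simp only [Matrix.of_apply, vecI, Matrix.single]
    by_cases h1 : a = m <;> by_cases h2 : c = n
    · simp [h1, h2]
    · simp [h1, h2, Ne.symm h2]
    · simp [h1, h2, Ne.symm h1]
    · simp [h1, h2, Ne.symm h1, Ne.symm h2]
  simp only [choi, extMap, Matrix.of_apply]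
  exact congrFun (congrFun (congrArg (fun M => Φ M) this) p) q

lemma extMap_apply_eq {d d' : ℕ} {n : Type*} [Fintype n]
    (Φ : Matrix (Fin d) (Fin d) ℂ →ₗ[ℂ] Matrix (Fin d') (Fin d') ℂ)
    (X : Matrix (Fin d × n) (Fin d × n) ℂ) (p q : Fin d') (a b : n) :
    extMap Φ X (p, a) (q, b) = ∑ m, ∑ k, X (m, a) (k, b) * choi Φ (p, m) (q, k) := by
  simp only [extMap, Matrix.of_apply]
  have h : (Matrix.of fun m k => X (m, a) (k, b) : Matrix (Fin d) (Fin d) ℂ)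
      = ∑ m, ∑ k, X (m, a) (k, b) • Matrix.single m k (1:ℂ) := by
    conv_lhs => rw [matrix_eq_sum_single (Matrix.of fun m k => X (m, a) (k, b))]
    ext a' c'
    simp [Matrix.sum_apply, smul_eq_mul, mul_ite, mul_one, mul_zero]
  rw [h]
  simp only [map_sum, _root_.map_smul, Matrix.sum_apply, Matrix.smul_apply, smul_eq_mul,
    choi_apply]

lemma sum3_comm {α β γ : Type*} [Fintype α] [Fintype β] [Fintype γ] (f : α → β → γ → ℂ) :
    ∑ a, ∑ b, ∑ c, f a b c = ∑ c, ∑ a, ∑ b, f a b c := by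
  have h : ∀ a : α, ∑ b, ∑ c, f a b c = ∑ c, ∑ b, f a b c := fun a => Finset.sum_comm
  simp_rw [h]
  exact Finset.sum_comm

lemma sum4_comm {α β γ δ : Type*} [Fintype α] [Fintype β] [Fintype γ] [Fintype δ]
    (f : α → β → γ → δ → ℂ) :
    ∑ a, ∑ b, ∑ c, ∑ e, f a b c e = ∑ c, ∑ e, ∑ a, ∑ b, f a b c e := by
  have h1 : ∑ a, ∑ b, ∑ c, ∑ e, f a b c e
      = ∑ p : α × β, ∑ q : γ × δ, f p.1 p.2 q.1 q.2 := by
    simp [Fintype.sum_prod_type]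
  have h2 : ∑ c, ∑ e, ∑ a, ∑ b, f a b c e
      = ∑ q : γ × δ, ∑ p : α × β, f p.1 p.2 q.1 q.2 := by
    simp [Fintype.sum_prod_type]
  rw [h1, h2, Finset.sum_comm]

lemma psd_real_smul {n' : Type*} [Fintype n'] {A : Matrix n' n' ℂ} (hA : A.PosSemidef)
    {c : ℝ} (hc : 0 ≤ c) : ((c:ℂ) • A).PosSemidef := by
  rw [posSemidef_iff_dotProduct_mulVec]
  constructor
  · have h1 := hA.1
    unfold Matrix.IsHermitian at *
    rw [conjTranspose_smul, h1]
    congr 1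
    simp [Complex.star_def, Complex.conj_ofReal]
  · intro x
    have h2 := (posSemidef_iff_dotProduct_mulVec.mp hA).2 x
    have : star x ⬝ᵥ ((c:ℂ) • A) *ᵥ x = (c:ℂ) * (star x ⬝ᵥ A *ᵥ x) := by
      rw [smul_mulVec, dotProduct_smul, smul_eq_mul]
    rw [this]
    exact mul_nonneg (by exact_mod_cast hc) h2

open scoped MatrixOrder in
lemma psd_exists_conjTranspose_mul_self {n' : Type*} [Fintype n'] [DecidableEq n']
    {B : Matrix n' n' ℂ} (hB : B.PosSemidef) : ∃ L : Matrix n' n' ℂ, B = Lᴴ * L := by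
  obtain ⟨L, hL⟩ := CStarAlgebra.nonneg_iff_eq_star_mul_self.mp hB.nonneg
  exact ⟨L, hL⟩

lemma C_psd {d : ℕ} {n : Type*} [Fintype n] [DecidableEq n]
    (B : Matrix (Fin d) (Fin d) ℂ) (hB : B.PosSemidef)
    (ρ : Matrix (Fin d × n) (Fin d × n) ℂ) (hρ : ρ.PosSemidef) :
    (Matrix.of fun a b => ∑ m, ∑ t, ρ (m, a) (t, b) * B m t).PosSemidef := by
  obtain ⟨L, hL⟩ := psd_exists_conjTranspose_mul_self hB
  obtain ⟨R, hR⟩ := psd_exists_conjTranspose_mul_self hρ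
  set S : Matrix (Fin d × (Fin d × n)) n ℂ :=
    Matrix.of fun jt a => ∑ m, L jt.1 m * R jt.2 (m, a) with hS
  have key : (Matrix.of fun a b => ∑ m, ∑ t, ρ (m, a) (t, b) * B m t) = Sᴴ * S := by
    ext a b
    have hR' : ∀ m t, ρ (m, a) (t, b) = ∑ u, star (R u (m, a)) * R u (t, b) := by
      intro m t; rw [hR]; simp [Matrix.mul_apply, conjTranspose_apply]
    have hL' : ∀ m t, B m t = ∑ j, star (L j m) * L j t := by
      intro m t; rw [hL]; simp [Matrix.mul_apply, conjTranspose_apply]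
    simp only [Matrix.of_apply, Matrix.mul_apply, conjTranspose_apply, hS, star_sum, star_mul']
    rw [Fintype.sum_prod_type]
    simp only [hR', hL', Finset.sum_mul_sum]
    rw [sum4_comm]
    conv_lhs => rw [Finset.sum_comm]
    refine Finset.sum_congr rfl fun j _ => Finset.sum_congr rfl fun u _ =>
      Finset.sum_congr rfl fun m _ => Finset.sum_congr rfl fun t _ => ?_
    ring
  rw [key]
  exact Matrix.posSemidef_conjTranspose_mul_self S

lemma rho0_psd {d : ℕ} :
    (Matrix.of fun p q => vecI (d := d) p * vecI q).PosSemidef := by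
  have h : (Matrix.of fun p q => vecI (d := d) p * vecI q)
      = (Matrix.of fun (_ : Fin 1) p => vecI (d := d) p)ᴴ
        * (Matrix.of fun (_ : Fin 1) p => vecI (d := d) p) := by
    ext p q
    simp [Matrix.mul_apply, conjTranspose_apply, vecI, apply_ite (star : ℂ → ℂ)]
  rw [h]
  exact Matrix.posSemidef_conjTranspose_mul_self _

lemma rho0_trace {d : ℕ} :
    (Matrix.of fun p q => vecI (d := d) p * vecI q).trace = (d : ℂ) := by
  simp only [Matrix.trace, Matrix.diag, Matrix.of_apply, vecI]
  rw [Fintype.sum_prod_type]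
  simp

lemma extMap_smul {d d' : ℕ} {n : Type*}
    (Φ : Matrix (Fin d) (Fin d) ℂ →ₗ[ℂ] Matrix (Fin d') (Fin d') ℂ)
    (c : ℂ) (X : Matrix (Fin d × n) (Fin d × n) ℂ) :
    extMap Φ (c • X) = c • extMap Φ X := by
  ext ⟨p, a⟩ ⟨q, b⟩
  simp only [extMap, Matrix.of_apply, Matrix.smul_apply, smul_eq_mul]
  have h : (Matrix.of fun m k => c * X (m, a) (k, b) : Matrix (Fin d) (Fin d) ℂ)
      = c • (Matrix.of fun m k => X (m, a) (k, b)) := by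
    ext m k; simp
  rw [h, _root_.map_smul]
  simp

/-- a channel `Φ` is entanglement-breaking — `(Φ ⊗ id)(ρ)` is separable
for every state `ρ` on `ℂ^d ⊗ ℂ^n`, for all `n` — iff its Choi operator is separable. -/
theorem entanglementBreaking_iff_choi_separable {d d' : ℕ}
    (Φ : Matrix (Fin d) (Fin d) ℂ →ₗ[ℂ] Matrix (Fin d') (Fin d') ℂ)
    (hCP : (choi Φ).PosSemidef) (hTP : ∀ X, (Φ X).trace = X.trace) :
    (∀ (n : ℕ) (ρ : Matrix (Fin d × Fin n) (Fin d × Fin n) ℂ),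
        ρ.PosSemidef → ρ.trace = 1 → Separable (extMap Φ ρ)) ↔
      Separable (choi Φ) := by
  constructor
  · intro h
    by_cases hd : d = 0
    · subst hd
      refine ⟨0, ![], ![], by simp, by simp, ?_⟩
      ext ⟨p, m⟩
      exact m.elim0
    · have hdC : (d : ℂ) ≠ 0 := Nat.cast_ne_zero.mpr hd
      set ρ0 : Matrix (Fin d × Fin d) (Fin d × Fin d) ℂ :=
        Matrix.of fun p q => vecI p * vecI q with hρ0
      have hpsd : ((((d:ℝ)⁻¹ : ℝ) : ℂ) • ρ0).PosSemidef :=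
        psd_real_smul rho0_psd (inv_nonneg.mpr (Nat.cast_nonneg d))
      have hcast : ((((d:ℝ)⁻¹ : ℝ) : ℂ)) = (d : ℂ)⁻¹ := by push_cast; ring
      have htr : ((((d:ℝ)⁻¹ : ℝ) : ℂ) • ρ0).trace = 1 := by
        rw [Matrix.trace_smul, hρ0, rho0_trace, hcast, smul_eq_mul,
          inv_mul_cancel₀ hdC]
      obtain ⟨k, A, B, hA, hB, hsum⟩ := h d _ hpsd htr
      have hext : extMap Φ (((((d:ℝ)⁻¹ : ℝ) : ℂ)) • ρ0) = (d:ℂ)⁻¹ • choi Φ := by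
        rw [extMap_smul, hcast]
        rfl
      refine ⟨k, fun i => (d : ℂ) • A i, B, ?_, hB, ?_⟩
      · intro i
        have := psd_real_smul (hA i) (c := (d:ℝ)) (Nat.cast_nonneg d)
        simpa using this
      · have : choi Φ = (d : ℂ) • ((d:ℂ)⁻¹ • choi Φ) := by
          rw [smul_smul, mul_inv_cancel₀ hdC, one_smul]
        rw [this, ← hext, hsum, Finset.smul_sum]
        refine Finset.sum_congr rfl fun i _ => ?_
        rw [smul_kronecker]
  · intro hsep n ρ hρ htr
    obtain ⟨k, A, B, hA, hB, hchoi⟩ := hsep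
    refine ⟨k, A, fun i => Matrix.of fun a b => ∑ m, ∑ t, ρ (m, a) (t, b) * B i m t,
      hA, fun i => C_psd (B i) (hB i) ρ hρ, ?_⟩
    ext ⟨p, a⟩ ⟨q, b⟩
    rw [extMap_apply_eq]
    simp only [hchoi, Matrix.sum_apply, kroneckerMap_apply, Matrix.of_apply,
      Finset.mul_sum, Finset.sum_mul]
    rw [sum3_comm]
    refine Finset.sum_congr rfl fun i _ => Finset.sum_congr rfl fun m _ =>
      Finset.sum_congr rfl fun t _ => ?_
    ring
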